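/- Let n and k be positive integers with gcd(n, k) = 1, and let L be a multiset of k positive integers whose sum is n. Then k divides the multinomial coefficient k! / (j_1! · j_2! · ... · j_m!), where j_1, ..., j_m are the multiplicities of the distinct values occurring in L (so that j_1 + ... + j_m = k). Equivalently, k divides the number of ordered compositions of n into k parts whose multiset of parts equals L. -/

import Mathlib

open Nat

lemma key_step (s : Finset ℕ) (f : ℕ → ℕ) (v : ℕ) (hv : v ∈ s) (hfv : 0 < f v) :
    f v * Nat.multinomial s f =
      (∑ i ∈ s, f i) * Nat.multinomial s (Function.update f v (f v - 1)) := by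
  set f' := Function.update f v (f v - 1) with hf'
  have hP' : 0 < ∏ i ∈ s, (f' i)! := Finset.prod_pos fun i _ => Nat.factorial_pos _
  apply Nat.eq_of_mul_eq_mul_left hP'
  have hprod : f v * ∏ i ∈ s, (f' i)! = ∏ i ∈ s, (f i)! := by
    rw [← Finset.prod_erase_mul s _ hv, ← Finset.prod_erase_mul s _ hv]
    have h1 : ∀ i ∈ s.erase v, (f' i)! = (f i)! := by
      intro i hi
      rw [hf', Function.update_of_ne (Finset.ne_of_mem_erase hi)]
    rw [Finset.prod_congr rfl h1]
    have : f' v = f v - 1 := by rw [hf', Function.update_self]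
    rw [this]
    have := Nat.succ_pred_eq_of_pos hfv
    calc f v * ((∏ i ∈ s.erase v, (f i)!) * (f v - 1)!)
        = (∏ i ∈ s.erase v, (f i)!) * (f v * (f v - 1)!) := by ring
      _ = (∏ i ∈ s.erase v, (f i)!) * (f v)! := by
          rw [Nat.mul_factorial_pred hfv.ne']
  have hsum' : ∑ i ∈ s, f' i = (∑ i ∈ s, f i) - 1 := by
    rw [hf', Finset.sum_update_of_mem hv, Finset.sdiff_singleton_eq_erase,
      ← Finset.add_sum_erase s f hv]
    omega
  have hspos : 0 < ∑ i ∈ s, f i := by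
    calc 0 < f v := hfv
      _ ≤ _ := Finset.single_le_sum (f := f) (fun i _ => Nat.zero_le _) hv
  calc (∏ i ∈ s, (f' i)!) * (f v * Nat.multinomial s f)
      = f v * ((∏ i ∈ s, (f' i)!) * Nat.multinomial s f) := by ring
    _ = (∏ i ∈ s, (f i)!) * Nat.multinomial s f := by rw [← hprod]; ring
    _ = (∑ i ∈ s, f i)! := Nat.multinomial_spec s f
    _ = (∑ i ∈ s, f i) * ((∑ i ∈ s, f i) - 1)! := (Nat.mul_factorial_pred hspos.ne').symm
    _ = (∑ i ∈ s, f i) * (∑ i ∈ s, f' i)! := by rw [hsum']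
    _ = (∑ i ∈ s, f i) * ((∏ i ∈ s, (f' i)!) * Nat.multinomial s f') := by
        rw [Nat.multinomial_spec s f']
    _ = (∏ i ∈ s, (f' i)!) * ((∑ i ∈ s, f i) * Nat.multinomial s f') := by ring

/-- If `gcd(n, k) = 1` and `L` is a multiset of `k` positive integers summing to `n`, then
`k` divides the multinomial coefficient `k! / (j_1! ⋯ j_m!)`, where the `j_i` are the
multiplicities of the distinct values of `L`. -/
theorem stmt_6 (n k : ℕ) (hn : 0 < n) (hk : 0 < k) (hcop : Nat.gcd n k = 1)
    (L : Multiset ℕ) (hpos : ∀ x ∈ L, 0 < x) (hcard : Multiset.card L = k)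
    (hsum : L.sum = n) :
    k ∣ Nat.multinomial L.toFinset L.count := by
  set s := L.toFinset
  set f := L.count
  have hsumf : ∑ i ∈ s, f i = k := by
    rw [Multiset.toFinset_sum_count_eq, hcard]
  -- k ∣ f v * multinomial for each v ∈ s
  have hdvd : ∀ v ∈ s, k ∣ f v * Nat.multinomial s f := by
    intro v hv
    have hfv : 0 < f v := Multiset.count_pos.mpr (Multiset.mem_toFinset.mp hv)
    rw [key_step s f v hv hfv, hsumf]
    exact Dvd.intro _ rfl
  have hn' : n = ∑ v ∈ s, v * f v := by
    conv_lhs => rw [← hsum, ← Multiset.toFinset_sum_count_nsmul_eq L]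
    rw [Multiset.sum_sum]
    refine Finset.sum_congr rfl fun v _ => ?_
    rw [Multiset.sum_nsmul, Multiset.sum_singleton, smul_eq_mul, mul_comm]
  have hknm : k ∣ n * Nat.multinomial s f := by
    rw [hn', Finset.sum_mul]
    refine Finset.dvd_sum fun v hv => ?_
    rw [mul_assoc]
    exact Dvd.dvd.mul_left (hdvd v hv) v
  exact (Nat.Coprime.dvd_of_dvd_mul_left (Nat.coprime_comm.mp hcop) hknm)
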